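/- Fix a ∈ {0,1}. Suppose the mean potential outcomes satisfy m_n^(a) = ⟨λ_n, ρ_a⟩ + η_n^(a) for all n ∈ {1,…,N}, and suppose the weights β^(a) ∈ ℝ^{I^(a)} satisfy the linear span inclusion Σ_{n∈M^(1−a)} λ_n = Σ_{n∈I^(a)} β_n^(a) λ_n. Then Σ_{n∈M} m_n^(a) = Σ_{n∈M^(a)} m_n^(a) + Σ_{n∈I^(a)} β_n^(a) m_n^(a) − Σ_{n∈I^(a)} β_n^(a) η_n^(a) + Σ_{n∈M^(1−a)} η_n^(a). (This is the identification identity of Theorem 1, with conditional expectations of potential outcomes written as the deterministic means m_n^(a).) -/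
import Mathlib


open Finset

/-- Identification identity, Theorem 1.
Fix a treatment `a ∈ {0,1}`.  Units are `n ∈ Fin N` with assigned treatments `A n`;
`I^(a) = {n | A n = a}`, `M` is a subset of units, `M^(a) = M ∩ I^(a)`.
If the mean potential outcomes satisfy `m n a = ⟨λ n, ρ a⟩ + η n a` and the weights
`β` satisfy the linear span inclusion `∑_{n ∈ M^(1-a)} λ n = ∑_{n ∈ I^(a)} β n • λ n`,
then `∑_{n∈M} m n a = ∑_{n∈M^(a)} m n a + ∑_{n∈I^(a)} β n * m n a
  - ∑_{n∈I^(a)} β n * η n a + ∑_{n∈M^(1-a)} η n a`. -/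
theorem stmt0
    (N r : ℕ) (a : Fin 2)
    (A : Fin N → Fin 2)
    (m η : Fin N → Fin 2 → ℝ)
    (lam : Fin N → Fin r → ℝ) (ρ : Fin 2 → Fin r → ℝ)
    (M : Finset (Fin N))
    (β : Fin N → ℝ)
    (hm : ∀ n, m n a = (∑ i, lam n i * ρ a i) + η n a)
    (hspan : ∀ i, ∑ n ∈ M.filter (fun n => A n = 1 - a), lam n i
              = ∑ n ∈ univ.filter (fun n => A n = a), β n * lam n i) :
    ∑ n ∈ M, m n a
      = ∑ n ∈ M.filter (fun n => A n = a), m n a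
        + ∑ n ∈ univ.filter (fun n => A n = a), β n * m n a
        - ∑ n ∈ univ.filter (fun n => A n = a), β n * η n a
        + ∑ n ∈ M.filter (fun n => A n = 1 - a), η n a := by
  have hne : ∀ n : Fin N, ¬ (A n = a) ↔ A n = 1 - a := by
    intro n
    fin_cases a <;> omega
  have hsplit : ∑ n ∈ M, m n a
      = ∑ n ∈ M.filter (fun n => A n = a), m n a
        + ∑ n ∈ M.filter (fun n => A n = 1 - a), m n a := by
    rw [← Finset.sum_filter_add_sum_filter_not M (fun n => A n = a)]
    congr 1
    apply Finset.sum_congr _ (fun _ _ => rfl)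
    apply Finset.filter_congr
    intro n _
    simpa using hne n
  rw [hsplit]
  have key : ∑ n ∈ M.filter (fun n => A n = 1 - a), (∑ i, lam n i * ρ a i)
      = ∑ n ∈ univ.filter (fun n => A n = a), β n * (∑ i, lam n i * ρ a i) := by
    simp_rw [Finset.mul_sum]
    rw [Finset.sum_comm, Finset.sum_comm (s := univ.filter (fun n => A n = a))]
    refine Finset.sum_congr rfl fun i _ => ?_
    simp_rw [← mul_assoc, ← Finset.sum_mul, hspan]
  simp only [hm, Finset.sum_add_distrib, mul_add]
  rw [key]
  ring
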